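/- Let (p*, p⁺*, p⁻*, x*) be an optimal solution of the L-ESM subproblem and set X* = Σ_{m∈U} x_m*. If for some m ∈ U with p̄_m > 0 one has p_m⁺* = 0, p_m⁻* = 0, and p_m* = p̄_m (so x_m* = p̄_m − D_m, Mode 4), then max(w⁻, c_m·p̄_m + b_m) ≤ w⁰ − a·(x_m* + X*) ≤ w⁺; in particular c_m·p̄_m + b_m ≤ w⁺, i.e. γ_m ≤ β_m. -/
import Mathlib


open Finset

variable {U : Type*} [Fintype U]

/-- A point `(p, p⁺, p⁻, x)` is feasible for the L-ESM subproblem: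
power balance, generator bounds, and nonnegativity of grid trades. -/
def Feasible (D pbar : U → ℝ) (p pp pm x : U → ℝ) : Prop :=
  ∀ m : U, D m + x m + pm m = p m + pp m ∧
    0 ≤ p m ∧ p m ≤ pbar m ∧ 0 ≤ pp m ∧ 0 ≤ pm m

/-- Objective of the L-ESM subproblem at base price `w0`. -/
noncomputable def Objective (c b : U → ℝ) (wplus wminus a w0 : ℝ)
    (p pp pm x : U → ℝ) : ℝ :=
  (∑ m : U, (c m / 2 * (p m) ^ 2 + b m * p m + wplus * pp m
      - wminus * pm m - w0 * x m))
    + a / 2 * ∑ m : U, (x m) ^ 2 + a / 2 * (∑ m : U, x m) ^ 2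

/-- `(p, p⁺, p⁻, x)` is an optimal solution of the L-ESM subproblem. -/
noncomputable def IsOptimal (c b D pbar : U → ℝ) (wplus wminus a w0 : ℝ)
    (p pp pm x : U → ℝ) : Prop :=
  Feasible D pbar p pp pm x ∧
    ∀ q qp qm y : U → ℝ, Feasible D pbar q qp qm y →
      Objective c b wplus wminus a w0 p pp pm x ≤
        Objective c b wplus wminus a w0 q qp qm y

/-- Sum over all of `U` of functions agreeing off `m`. -/
lemma sum_eq_of_eq_off [DecidableEq U] {m : U} (F G : U → ℝ) (h : ∀ j, j ≠ m → F j = G j) :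
    ∑ j : U, F j = (∑ j : U, G j) + (F m - G m) := by
  classical
  rw [← Finset.add_sum_erase _ F (Finset.mem_univ m),
    ← Finset.add_sum_erase _ G (Finset.mem_univ m),
    Finset.sum_congr rfl (fun j hj => h j (Finset.ne_of_mem_erase hj))]
  ring

/-- Objective change under a single-coordinate update of all four variables. -/
lemma objective_update [DecidableEq U] (c b : U → ℝ) (wplus wminus a w0 : ℝ)
    (p pp pm x : U → ℝ) (m : U) (vp vpp vpm vx : ℝ) :
    Objective c b wplus wminus a w0 (Function.update p m vp)
      (Function.update pp m vpp) (Function.update pm m vpm)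
      (Function.update x m vx)
    = Objective c b wplus wminus a w0 p pp pm x
      + ((c m / 2 * vp ^ 2 + b m * vp + wplus * vpp - wminus * vpm - w0 * vx)
        - (c m / 2 * (p m) ^ 2 + b m * (p m) + wplus * pp m - wminus * pm m
          - w0 * x m))
      + a / 2 * (vx ^ 2 - (x m) ^ 2)
      + a / 2 * (((∑ j : U, x j) + vx - x m) ^ 2 - (∑ j : U, x j) ^ 2) := by
  classical
  unfold Objective
  rw [sum_eq_of_eq_off (m := m)
      (fun j => c j / 2 * (Function.update p m vp j) ^ 2
        + b j * Function.update p m vp j + wplus * Function.update pp m vpp j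
        - wminus * Function.update pm m vpm j - w0 * Function.update x m vx j)
      (fun j => c j / 2 * (p j) ^ 2 + b j * p j + wplus * pp j
        - wminus * pm j - w0 * x j)
      (fun j hj => by simp [Function.update_of_ne hj]),
    sum_eq_of_eq_off (m := m) (fun j => (Function.update x m vx j) ^ 2)
      (fun j => (x j) ^ 2) (fun j hj => by simp [Function.update_of_ne hj]),
    sum_eq_of_eq_off (m := m) (fun j => Function.update x m vx j) x
      (fun j hj => by simp [Function.update_of_ne hj])]
  simp only [Function.update_self]
  ring

/-- First-order limit lemma. -/
lemma nonneg_of_perturb (A B ε : ℝ) (hB : 0 < B) (hε : 0 < ε)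
    (h : ∀ t : ℝ, 0 < t → t ≤ ε → 0 ≤ A * t + B * t ^ 2) : 0 ≤ A := by
  by_contra hA
  push_neg at hA
  set t := min ε (-A / (2 * B)) with ht
  have ht0 : 0 < t := lt_min hε (div_pos (by linarith) (by positivity))
  have h1 := h t ht0 (min_le_left _ _)
  have h2 : t * (2 * B) ≤ -A :=
    (le_div_iff₀ (by positivity)).mp (min_le_right _ _)
  nlinarith [mul_le_mul_of_nonneg_left h2 ht0.le, mul_pos ht0 ht0]

/-- if `p̄_m > 0`, `p⁺_m = 0`, `p⁻_m = 0` and `p_m = p̄_m` at an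
optimum (Mode 4, so `x_m = p̄_m − D_m`), then
`max(w⁻, c_m p̄_m + b_m) ≤ w⁰ − a(x_m + X) ≤ w⁺`;
in particular `c_m p̄_m + b_m ≤ w⁺`, i.e. `γ_m ≤ β_m`. -/
theorem lesm_mode4_characterization [Nonempty U]
    (c b D pbar : U → ℝ) (wplus wminus a w0 : ℝ)
    (hc : ∀ m, 0 < c m) (hpbar : ∀ m, 0 ≤ pbar m)
    (hb : ∀ m, 0 < b m) (hbw : ∀ m, b m < wminus)
    (hw : wminus < wplus) (ha : 0 < a)
    (p pp pm x : U → ℝ)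
    (hopt : IsOptimal c b D pbar wplus wminus a w0 p pp pm x)
    (m : U) (hpbarm : 0 < pbar m)
    (hppm : pp m = 0) (hpmm : pm m = 0) (hpm : p m = pbar m) :
    x m = pbar m - D m ∧
    (max wminus (c m * pbar m + b m) ≤ w0 - a * (x m + ∑ j : U, x j) ∧
      w0 - a * (x m + ∑ j : U, x j) ≤ wplus) ∧
    c m * pbar m + b m ≤ wplus ∧
    pbar m - D m ≤ (wplus - b m) / c m - D m := by
  classical
  obtain ⟨hfeas, hopt2⟩ := hopt
  obtain ⟨hbal, _, _, _, _⟩ := hfeas m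
  have hx : x m = pbar m - D m := by rw [hppm, hpmm, hpm] at hbal; linarith
  set X := ∑ j : U, x j with hX
  -- generic perturbation inequality
  have key : ∀ vp vpp vpm vx : ℝ,
      Feasible D pbar (Function.update p m vp) (Function.update pp m vpp)
        (Function.update pm m vpm) (Function.update x m vx) →
      0 ≤ ((c m / 2 * vp ^ 2 + b m * vp + wplus * vpp - wminus * vpm - w0 * vx)
        - (c m / 2 * (p m) ^ 2 + b m * (p m) + wplus * pp m - wminus * pm m
          - w0 * x m))
      + a / 2 * (vx ^ 2 - (x m) ^ 2)
      + a / 2 * ((X + vx - x m) ^ 2 - X ^ 2) := by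
    intro vp vpp vpm vx hf
    have := hopt2 _ _ _ _ hf
    rw [objective_update] at this
    linarith
  -- helper to build feasibility of a single-coordinate perturbation
  have feas : ∀ vp vpp vpm vx : ℝ,
      D m + vx + vpm = vp + vpp → 0 ≤ vp → vp ≤ pbar m → 0 ≤ vpp → 0 ≤ vpm →
      Feasible D pbar (Function.update p m vp) (Function.update pp m vpp)
        (Function.update pm m vpm) (Function.update x m vx) := by
    intro vp vpp vpm vx h1 h2 h3 h4 h5 j
    by_cases hj : j = m
    · subst hj; simp only [Function.update_self]; exact ⟨h1, h2, h3, h4, h5⟩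
    · simp only [Function.update_of_ne hj]; exact hfeas j
  -- (1) wminus ≤ W
  have h1 : 0 ≤ w0 - a * (x m + X) - wminus := by
    apply nonneg_of_perturb _ a 1 ha one_pos
    intro t ht0 _
    have hf := feas (p m) (pp m) t (x m - t)
      (by linarith) (by rw [hpm]; exact hpbarm.le) (by rw [hpm])
      (by rw [hppm]) ht0.le
    have h := key (p m) (pp m) t (x m - t) hf
    rw [hpmm] at h
    nlinarith [h]
  -- (2) c pbar + b ≤ W
  have h2 : 0 ≤ w0 - a * (x m + X) - (c m * pbar m + b m) := by
    apply nonneg_of_perturb _ (c m / 2 + a) (pbar m)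
      (by have := hc m; linarith) hpbarm
    intro t ht0 htp
    have hf := feas (p m - t) (pp m) (pm m) (x m - t)
      (by linarith) (by rw [hpm]; linarith) (by rw [hpm]; linarith)
      (by rw [hppm]) (by rw [hpmm])
    have h := key (p m - t) (pp m) (pm m) (x m - t) hf
    rw [hpm] at h
    nlinarith [h]
  -- (3) W ≤ wplus
  have h3 : 0 ≤ wplus - (w0 - a * (x m + X)) := by
    apply nonneg_of_perturb _ a 1 ha one_pos
    intro t ht0 _
    have hf := feas (p m) t (pm m) (x m + t)
      (by linarith) (by rw [hpm]; exact hpbarm.le) (by rw [hpm])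
      ht0.le (by rw [hpmm])
    have h := key (p m) t (pm m) (x m + t) hf
    rw [hppm] at h
    nlinarith [h]
  refine ⟨hx, ⟨max_le (by linarith) (by linarith), by linarith⟩,
    by linarith, ?_⟩
  have hcb : pbar m ≤ (wplus - b m) / c m :=
    (le_div_iff₀ (hc m)).mpr (by nlinarith)
  linarith
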